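/- Let w ∈ ℝⁿ and v ∈ ℝᵏ be vectors with nonnegative entries each summing to 1, let λ > 0, set α = 1/(2λ), and let L be an n×n real matrix and X an n×k real matrix. Then the proximal subproblem min_{Z ∈ Π(w,v)} (1/(2α))‖Z − (I − 2αL)X‖² − λ‖Z‖² admits a minimizer Z* that has at most n + k − 1 nonzero entries. Consequently, with step size α = 1/(2λ), every iterate of the nonconvex accelerated proximal gradient algorithm for the OT-cut problem can be taken to be an extreme point of the transportation polytope and hence has at most n + k − 1 nonzero entries. -/

import Mathlib

open Finset Matrix

/-- The transportation polytope `Π(w, v)`: `n × k` real matrices with nonnegative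
entries, row sums `w` and column sums `v`. -/
def transportPolytope {n k : ℕ} (w : Fin n → ℝ) (v : Fin k → ℝ) :
    Set (Matrix (Fin n) (Fin k) ℝ) :=
  {X | (∀ i j, 0 ≤ X i j) ∧ (∀ i, ∑ j, X i j = w i) ∧ (∀ j, ∑ i, X i j = v j)}

/-- Frobenius inner product `⟨A, B⟩ = Tr(Aᵀ B)`. -/
noncomputable def frobInner {n k : ℕ} (A B : Matrix (Fin n) (Fin k) ℝ) : ℝ :=
  Matrix.trace (Aᵀ * B)

/-- Squared Frobenius norm `‖A‖² = ⟨A, A⟩`. -/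
noncomputable def frobNormSq {n k : ℕ} (A : Matrix (Fin n) (Fin k) ℝ) : ℝ :=
  frobInner A A


lemma frobInner_eq_sum {n k : ℕ} (A B : Matrix (Fin n) (Fin k) ℝ) :
    frobInner A B = ∑ j, ∑ i, A i j * B i j := by
  simp [frobInner, Matrix.trace, Matrix.mul_apply, Matrix.diag]

lemma frobNormSq_sub_expand {n k : ℕ} (A B : Matrix (Fin n) (Fin k) ℝ) :
    frobNormSq (A - B) = frobNormSq A - 2 * frobInner A B + frobNormSq B := by
  simp only [frobNormSq, frobInner_eq_sum, Matrix.sub_apply, Finset.mul_sum,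
    ← Finset.sum_sub_distrib, ← Finset.sum_add_distrib]
  exact Finset.sum_congr rfl fun j _ => Finset.sum_congr rfl fun i _ => by ring

/-- there is an extreme point of the transportation polytope maximizing any
linear functional `Z ↦ frobInner Z Y`. -/
lemma exists_extreme_max {n k : ℕ} (w : Fin n → ℝ) (v : Fin k → ℝ)
    (hw : ∀ i, 0 ≤ w i) (hv : ∀ j, 0 ≤ v j)
    (hw1 : ∑ i, w i = 1) (hv1 : ∑ j, v j = 1)
    (Y : Matrix (Fin n) (Fin k) ℝ) :
    ∃ Zstar ∈ Set.extremePoints ℝ (transportPolytope w v),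
      ∀ Z ∈ transportPolytope w v, frobInner Z Y ≤ frobInner Zstar Y := by
  classical
  letI : NormedAddCommGroup (Matrix (Fin n) (Fin k) ℝ) := Matrix.normedAddCommGroup
  letI : NormedSpace ℝ (Matrix (Fin n) (Fin k) ℝ) := Matrix.normedSpace
  haveI : LocallyConvexSpace ℝ (Matrix (Fin n) (Fin k) ℝ) := NormedSpace.toLocallyConvexSpace
  set s := transportPolytope w v with hs
  -- the linear functional
  let l : Matrix (Fin n) (Fin k) ℝ →ₗ[ℝ] ℝ :=
    { toFun := fun Z => frobInner Z Y
      map_add' := by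
        intro A B
        simp only [frobInner_eq_sum, Matrix.add_apply, add_mul, Finset.sum_add_distrib]
      map_smul' := by
        intro c A
        simp only [frobInner_eq_sum, Matrix.smul_apply, smul_eq_mul, RingHom.id_apply,
          Finset.mul_sum, mul_assoc] }
  have hlcont : Continuous l := l.continuous_of_finiteDimensional
  -- nonempty
  have hne : s.Nonempty := by
    refine ⟨Matrix.of fun i j => w i * v j, fun i j => mul_nonneg (hw i) (hv j), ?_, ?_⟩
    · intro i
      simp only [Matrix.of_apply]
      rw [← Finset.mul_sum, hv1, mul_one]
    · intro j
      simp only [Matrix.of_apply]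
      rw [← Finset.sum_mul, hw1, one_mul]
  -- closed
  have hclosed : IsClosed s := by
    have h1 : ∀ (i : Fin n) (j : Fin k),
        Continuous fun X : Matrix (Fin n) (Fin k) ℝ => X i j := by
      intro i j
      exact LinearMap.continuous_of_finiteDimensional
        ({ toFun := fun X => X i j
           map_add' := fun _ _ => rfl
           map_smul' := fun _ _ => rfl } : Matrix (Fin n) (Fin k) ℝ →ₗ[ℝ] ℝ)
    have h2 : ∀ i : Fin n,
        Continuous fun X : Matrix (Fin n) (Fin k) ℝ => ∑ j, X i j := by
      intro i
      exact LinearMap.continuous_of_finiteDimensional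
        ({ toFun := fun X => ∑ j, X i j
           map_add' := by intro A B; simp [Finset.sum_add_distrib]
           map_smul' := by
             intro c A
             simp [Matrix.smul_apply, smul_eq_mul, Finset.mul_sum] }
           : Matrix (Fin n) (Fin k) ℝ →ₗ[ℝ] ℝ)
    have h3 : ∀ j : Fin k,
        Continuous fun X : Matrix (Fin n) (Fin k) ℝ => ∑ i, X i j := by
      intro j
      exact LinearMap.continuous_of_finiteDimensional
        ({ toFun := fun X => ∑ i, X i j
           map_add' := by intro A B; simp [Finset.sum_add_distrib]
           map_smul' := by
             intro c A
             simp [Matrix.smul_apply, smul_eq_mul, Finset.mul_sum] }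
           : Matrix (Fin n) (Fin k) ℝ →ₗ[ℝ] ℝ)
    have : s = (⋂ (i : Fin n) (j : Fin k), {X : Matrix (Fin n) (Fin k) ℝ | 0 ≤ X i j}) ∩
        ((⋂ i : Fin n, {X : Matrix (Fin n) (Fin k) ℝ | ∑ j, X i j = w i}) ∩
         (⋂ j : Fin k, {X : Matrix (Fin n) (Fin k) ℝ | ∑ i, X i j = v j})) := by
      ext X
      simp only [hs, transportPolytope, Set.mem_setOf_eq, Set.mem_inter_iff, Set.mem_iInter]
      try tauto
    rw [this]
    refine IsClosed.inter (isClosed_iInter fun i => isClosed_iInter fun j => ?_)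
      (IsClosed.inter (isClosed_iInter fun i => ?_) (isClosed_iInter fun j => ?_))
    · exact isClosed_le continuous_const (h1 i j)
    · exact isClosed_eq (h2 i) continuous_const
    · exact isClosed_eq (h3 j) continuous_const
  -- bounded
  have hbdd : Bornology.IsBounded s := by
    rw [Metric.isBounded_iff_subset_closedBall 0]
    refine ⟨1, fun X hX => ?_⟩
    rw [Metric.mem_closedBall, dist_zero_right]
    obtain ⟨hpos, hrow, _⟩ := hX
    rw [Matrix.norm_le_iff zero_le_one]
    intro i j
    rw [Real.norm_eq_abs, abs_of_nonneg (hpos i j)]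
    have h1 : X i j ≤ w i := by
      rw [← hrow i]
      exact Finset.single_le_sum (fun j' _ => hpos i j') (Finset.mem_univ j)
    have h2 : w i ≤ 1 := by
      rw [← hw1]
      exact Finset.single_le_sum (fun i' _ => hw i') (Finset.mem_univ i)
    linarith
  have hcomp : IsCompact s := Metric.isCompact_of_isClosed_isBounded hclosed hbdd
  -- exposed face of maximizers
  let lc : Matrix (Fin n) (Fin k) ℝ →L[ℝ] ℝ := LinearMap.toContinuousLinearMap l
  let t : Set (Matrix (Fin n) (Fin k) ℝ) := lc.toExposed s
  have hexp : IsExposed ℝ s t := ContinuousLinearMap.toExposed.isExposed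
  have htne : t.Nonempty := by
    obtain ⟨x, hxs, hxmax⟩ := hcomp.exists_isMaxOn hne hlcont.continuousOn
    exact ⟨x, hxs, fun y hy => hxmax hy⟩
  have htcomp : IsCompact t := hexp.isCompact hcomp
  obtain ⟨x, hx⟩ := htcomp.extremePoints_nonempty htne
  refine ⟨x, hexp.isExtreme.extremePoints_subset_extremePoints hx, ?_⟩
  obtain ⟨hxs, hxmax⟩ := (extremePoints_subset hx : x ∈ t)
  exact fun Z hZ => hxmax Z hZ

lemma extremePoint_card_support {n k : ℕ} (hn : 0 < n)
    {w : Fin n → ℝ} {v : Fin k → ℝ} {Z : Matrix (Fin n) (Fin k) ℝ}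
    (hZ : Z ∈ Set.extremePoints ℝ (transportPolytope w v)) :
    (Finset.univ.filter (fun p : Fin n × Fin k => Z p.1 p.2 ≠ 0)).card ≤ n + k - 1 := by
  classical
  by_contra hcard
  push_neg at hcard
  set S := Finset.univ.filter (fun p : Fin n × Fin k => Z p.1 p.2 ≠ 0) with hSdef
  have hcard' : n + k ≤ S.card := by omega
  -- matrix built from a vector indexed by the support
  set Dm : (↥S → ℝ) → Matrix (Fin n) (Fin k) ℝ :=
    fun d i j => if h : (i, j) ∈ S then d ⟨(i, j), h⟩ else 0 with hDm
  have Dm_add : ∀ d e, Dm (d + e) = Dm d + Dm e := by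
    intro d e; funext i j
    show Dm (d + e) i j = Dm d i j + Dm e i j
    by_cases h : (i, j) ∈ S <;> simp [hDm, h]
  have Dm_smul : ∀ (c : ℝ) d, Dm (c • d) = c • Dm d := by
    intro c d; funext i j
    show Dm (c • d) i j = c * Dm d i j
    by_cases h : (i, j) ∈ S <;> simp [hDm, h]
  let T : (↥S → ℝ) →ₗ[ℝ] (Fin n → ℝ) × (Fin k → ℝ) :=
    { toFun := fun d => (fun i => ∑ j, Dm d i j, fun j => ∑ i, Dm d i j)
      map_add' := by
        intro d e
        rw [Dm_add]
        refine Prod.ext ?_ ?_ <;> funext x <;>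
          simp [Finset.sum_add_distrib]
      map_smul' := by
        intro c d
        rw [Dm_smul]
        refine Prod.ext ?_ ?_ <;> funext x <;>
          simp [Finset.mul_sum] }
  let φ : ((Fin n → ℝ) × (Fin k → ℝ)) →ₗ[ℝ] ℝ :=
    { toFun := fun ab => (∑ i, ab.1 i) - ∑ j, ab.2 j
      map_add' := by
        intro a b
        simp only [Prod.fst_add, Prod.snd_add, Pi.add_apply]
        rw [Finset.sum_add_distrib, Finset.sum_add_distrib]
        ring
      map_smul' := by
        intro c a
        simp only [Prod.smul_fst, Prod.smul_snd, Pi.smul_apply, smul_eq_mul,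
          RingHom.id_apply]
        rw [mul_sub, Finset.mul_sum, Finset.mul_sum] }
  have hrange : LinearMap.range T ≤ LinearMap.ker φ := by
    rintro x ⟨d, rfl⟩
    simp only [LinearMap.mem_ker, T, φ, LinearMap.coe_mk, AddHom.coe_mk]
    rw [Finset.sum_comm]
    ring
  -- dimension count
  have hφsurj : Function.Surjective φ := by
    intro r
    refine ⟨(Pi.single ⟨0, hn⟩ r, 0), ?_⟩
    simp [φ, Finset.sum_pi_single']
  have hkerφ : Module.finrank ℝ (LinearMap.ker φ) = n + k - 1 := by
    have h1 := LinearMap.finrank_range_add_finrank_ker φ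
    rw [LinearMap.range_eq_top.2 hφsurj, finrank_top] at h1
    have h2 : Module.finrank ℝ ((Fin n → ℝ) × (Fin k → ℝ)) = n + k := by
      simp [Module.finrank_prod]
    rw [h2] at h1
    simp only [Module.finrank_self] at h1
    omega
  have hdom : Module.finrank ℝ (↥S → ℝ) = S.card := by
    rw [Module.finrank_fintype_fun_eq_card, Fintype.card_coe]
  have hkerT : LinearMap.ker T ≠ ⊥ := by
    intro hbot
    have h1 := LinearMap.finrank_range_add_finrank_ker T
    rw [hbot, hdom, finrank_bot] at h1
    have h2 : Module.finrank ℝ (LinearMap.range T) ≤ n + k - 1 := by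
      rw [← hkerφ]; exact Submodule.finrank_mono hrange
    omega
  obtain ⟨d, hdker, hdne⟩ := Submodule.exists_mem_ne_zero_of_ne_bot hkerT
  have hTd : T d = 0 := hdker
  have hrow : ∀ i, ∑ j, Dm d i j = 0 := by
    intro i
    have := congrFun (congrArg Prod.fst hTd) i
    simpa [T] using this
  have hcol : ∀ j, ∑ i, Dm d i j = 0 := by
    intro j
    have := congrFun (congrArg Prod.snd hTd) j
    simpa [T] using this
  -- D vanishes off S, and equals d on S
  have hDoff : ∀ p : Fin n × Fin k, p ∉ S → Dm d p.1 p.2 = 0 := by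
    intro p hp; simp [hDm, hp]
  have hZoff : ∀ p : Fin n × Fin k, p ∉ S → Z p.1 p.2 = 0 := by
    intro p hp
    by_contra h
    exact hp (by simp [hSdef, h])
  have hZmem : Z ∈ transportPolytope w v := hZ.1
  obtain ⟨hZpos, hZrow, hZcol⟩ := hZmem
  have hSne : S.Nonempty := Finset.card_pos.1 (by omega)
  -- find a nonzero entry of D
  obtain ⟨p0, hp0⟩ : ∃ p0 : ↥S, d p0 ≠ 0 := by
    by_contra h
    push_neg at h
    exact hdne (funext fun p => h p)
  have hDp0 : Dm d (p0 : Fin n × Fin k).1 (p0 : Fin n × Fin k).2 = d p0 := by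
    simp [hDm]
  set c : ℝ := S.inf' hSne (fun p => Z p.1 p.2) with hc
  set Mx : ℝ := S.sup' hSne (fun p => |Dm d p.1 p.2|) with hMx
  have hcpos : 0 < c := by
    rw [hc, Finset.lt_inf'_iff]
    intro p hp
    have hne : Z p.1 p.2 ≠ 0 := by
      simpa [hSdef] using hp
    exact lt_of_le_of_ne (hZpos p.1 p.2) (Ne.symm hne)
  have hMpos : 0 < Mx := by
    have h1 : |Dm d (p0 : Fin n × Fin k).1 (p0 : Fin n × Fin k).2| ≤ Mx := by
      rw [hMx]
      exact Finset.le_sup' (fun p : Fin n × Fin k => |Dm d p.1 p.2|) p0.2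
    have h2 : 0 < |d p0| := abs_pos.2 hp0
    rw [hDp0] at h1
    linarith
  set ε : ℝ := c / Mx with hε
  have hεpos : 0 < ε := div_pos hcpos hMpos
  have hbound : ∀ i j, ε * |Dm d i j| ≤ Z i j := by
    intro i j
    by_cases h : (i, j) ∈ S
    · have h1 : |Dm d i j| ≤ Mx := by
        rw [hMx]
        exact Finset.le_sup' (fun p : Fin n × Fin k => |Dm d p.1 p.2|) h
      have h2 : c ≤ Z i j := by
        rw [hc]
        exact Finset.inf'_le (fun p : Fin n × Fin k => Z p.1 p.2) h
      calc ε * |Dm d i j| ≤ ε * Mx := by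
            exact mul_le_mul_of_nonneg_left h1 hεpos.le
        _ = c := by rw [hε]; field_simp
        _ ≤ Z i j := h2
    · have := hDoff (i, j) h
      simp only [this, abs_zero, mul_zero]
      exact hZpos i j
  -- Z ± ε D are in the polytope
  have hmem : ∀ (s : ℝ), |s| = 1 → Z + (s * ε) • Dm d ∈ transportPolytope w v := by
    intro s hs
    refine ⟨?_, ?_, ?_⟩
    · intro i j
      have h1 : |s * ε * Dm d i j| ≤ Z i j := by
        rw [abs_mul, abs_mul, hs, one_mul, abs_of_pos hεpos]
        exact hbound i j
      have := neg_abs_le (s * ε * Dm d i j)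
      simp only [Matrix.add_apply, Matrix.smul_apply, smul_eq_mul]
      linarith
    · intro i
      simp only [Matrix.add_apply, Matrix.smul_apply, smul_eq_mul]
      rw [Finset.sum_add_distrib, ← Finset.mul_sum, hrow i, mul_zero, add_zero]
      exact hZrow i
    · intro j
      simp only [Matrix.add_apply, Matrix.smul_apply, smul_eq_mul]
      rw [Finset.sum_add_distrib, ← Finset.mul_sum, hcol j, mul_zero, add_zero]
      exact hZcol j
  have hmem1 : Z + ε • Dm d ∈ transportPolytope w v := by
    have := hmem 1 (by norm_num)
    simpa using this
  have hmem2 : Z + (-ε) • Dm d ∈ transportPolytope w v := by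
    have := hmem (-1) (by norm_num)
    simpa using this
  have hseg : Z ∈ openSegment ℝ (Z + ε • Dm d) (Z + (-ε) • Dm d) := by
    refine ⟨1/2, 1/2, by norm_num, by norm_num, by norm_num, ?_⟩
    module
  have := hZ.2 hmem1 hmem2 hseg
  have hεD : ε • Dm d = 0 := by
    have h := congrArg (fun A => A - Z) this
    simpa [add_sub_cancel_left] using h
  have : Dm d (p0 : Fin n × Fin k).1 (p0 : Fin n × Fin k).2 = 0 := by
    have := congrFun (congrFun hεD (p0 : Fin n × Fin k).1) (p0 : Fin n × Fin k).2
    simp only [Matrix.smul_apply, smul_eq_mul, Matrix.zero_apply] at this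
    rcases mul_eq_zero.1 this with h | h
    · exact absurd h (ne_of_gt hεpos)
    · exact h
  rw [hDp0] at this
  exact hp0 this

/-- **Sparse minimizers of the proximal subproblem.**
For probability vectors `w`, `v`, `λ > 0` and `α = 1/(2λ)`, the proximal subproblem
`min_{Z ∈ Π(w,v)} (1/(2α))‖Z − (I − 2αL)X‖² − λ‖Z‖²` admits a minimizer `Z*` that is
an extreme point of the transportation polytope and hence has at most `n + k − 1`
nonzero entries. -/
theorem prox_subproblem_sparse_minimizer {n k : ℕ}
    (w : Fin n → ℝ) (v : Fin k → ℝ)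
    (hw : ∀ i, 0 ≤ w i) (hv : ∀ j, 0 ≤ v j)
    (hw1 : ∑ i, w i = 1) (hv1 : ∑ j, v j = 1)
    (lam : ℝ) (hlam : 0 < lam) (α : ℝ) (hα : α = 1 / (2 * lam))
    (L : Matrix (Fin n) (Fin n) ℝ) (X : Matrix (Fin n) (Fin k) ℝ) :
    ∃ Zstar ∈ transportPolytope w v,
      (∀ Z ∈ transportPolytope w v,
        (1 / (2 * α)) * frobNormSq (Zstar - ((1 : Matrix (Fin n) (Fin n) ℝ) - (2 * α) • L) * X)
            - lam * frobNormSq Zstar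
          ≤ (1 / (2 * α)) * frobNormSq (Z - ((1 : Matrix (Fin n) (Fin n) ℝ) - (2 * α) • L) * X)
            - lam * frobNormSq Z) ∧
      Zstar ∈ Set.extremePoints ℝ (transportPolytope w v) ∧
      (Finset.univ.filter (fun p : Fin n × Fin k => Zstar p.1 p.2 ≠ 0)).card ≤ n + k - 1 := by
  have hn : 0 < n := by
    rcases Nat.eq_zero_or_pos n with h | h
    · subst h; simp at hw1
    · exact h
  set Y : Matrix (Fin n) (Fin k) ℝ := ((1 : Matrix (Fin n) (Fin n) ℝ) - (2 * α) • L) * X with hY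
  obtain ⟨Zstar, hZext, hZmax⟩ := exists_extreme_max w v hw hv hw1 hv1 Y
  have hZmem : Zstar ∈ transportPolytope w v := hZext.1
  have hcoef : 1 / (2 * α) = lam := by
    rw [hα]
    field_simp
  refine ⟨Zstar, hZmem, ?_, hZext, extremePoint_card_support hn hZext⟩
  intro Z hZ
  rw [hcoef, frobNormSq_sub_expand, frobNormSq_sub_expand]
  have h1 : lam * frobInner Z Y ≤ lam * frobInner Zstar Y :=
    mul_le_mul_of_nonneg_left (hZmax Z hZ) hlam.le
  nlinarith [h1]
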